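/- For a partial permutation matrix x with one-line encoding (a_1,...,a_n), the dimension of the intersection T_n x ∩ x T_n (T_n the upper triangular matrices) equals rank(x) + coinv(x), where rank(x) is the number of nonzero entries of x and coinv(x) = #{(i,j) : i < j, 0 < a_i < a_j}. -/

import Mathlib

/-- A partial permutation matrix: 0-1 entries with at most one nonzero entry
in each row and each column. -/
def IsPartialPerm {n : ℕ} {F : Type*} [Field F] (x : Matrix (Fin n) (Fin n) F) : Prop :=
  (∀ i j, x i j = 0 ∨ x i j = 1) ∧
  (∀ i j j', x i j ≠ 0 → x i j' ≠ 0 → j = j') ∧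
  (∀ i i' j, x i j ≠ 0 → x i' j ≠ 0 → i = i')

/-- The subspace of upper triangular matrices. -/
def upperT (F : Type*) [Field F] (n : ℕ) : Submodule F (Matrix (Fin n) (Fin n) F) where
  carrier := {t | ∀ i j : Fin n, j < i → t i j = 0}
  add_mem' := by
    intro a b ha hb i j hij
    simp [Matrix.add_apply, ha i j hij, hb i j hij]
  zero_mem' := by
    intro i j hij
    simp
  smul_mem' := by
    intro c a ha i j hij
    simp [Matrix.smul_apply, ha i j hij]

/-- coinv: number of pairs i < j with 0 < a i < a j. -/
def coinv (n : ℕ) (a : Fin n → ℕ) : ℕ :=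
  (Finset.univ.filter (fun p : Fin n × Fin n => p.1 < p.2 ∧ 0 < a p.1 ∧ a p.1 < a p.2)).card

def coordSub (F : Type*) [Field F] {n : ℕ} (Q : Fin n → Fin n → Prop) :
    Submodule F (Matrix (Fin n) (Fin n) F) where
  carrier := {m | ∀ i j, ¬ Q i j → m i j = 0}
  add_mem' := by
    intro p q hp hq i j h
    simp [Matrix.add_apply, hp i j h, hq i j h]
  zero_mem' := by intro i j h; rfl
  smul_mem' := by
    intro c p hp i j h
    simp [Matrix.smul_apply, hp i j h]

noncomputable def coordEquiv (F : Type*) [Field F] {n : ℕ} (Q : Fin n → Fin n → Prop)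
    [∀ i j, Decidable (Q i j)] :
    ↥(coordSub F Q) ≃ₗ[F] ({p : Fin n × Fin n // Q p.1 p.2} → F) where
  toFun := fun m p => m.1 p.1.1 p.1.2
  map_add' := fun a b => rfl
  map_smul' := fun c a => rfl
  invFun := fun f =>
    ⟨fun i j => if h : Q i j then f ⟨(i, j), h⟩ else 0, fun i j h => by simp [h]⟩
  left_inv := by
    intro m
    apply Subtype.ext
    funext i j
    by_cases h : Q i j
    · simp [h]
    · simp [h, m.2 i j h]
  right_inv := by
    intro f
    funext p
    simp [p.2]

lemma finrank_coord (F : Type*) [Field F] {n : ℕ} (Q : Fin n → Fin n → Prop)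
    [∀ i j, Decidable (Q i j)] :
    Module.finrank F ↥(coordSub F Q) =
      (Finset.univ.filter (fun p : Fin n × Fin n => Q p.1 p.2)).card := by
  rw [(coordEquiv F Q).finrank_eq, Module.finrank_fintype_fun_eq_card, Fintype.card_subtype]

theorem dim_intersection (F : Type*) [Field F] (n : ℕ) (x : Matrix (Fin n) (Fin n) F)
    (hx : IsPartialPerm x) (a : Fin n → ℕ) (hbd : ∀ j, a j ≤ n)
    (hcode : ∀ j i : Fin n, x i j ≠ 0 ↔ a j = i.val + 1) :
    Module.finrank F
      ↥((upperT F n).map (LinearMap.mulRight F x) ⊓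
        (upperT F n).map (LinearMap.mulLeft F x)) =
      (Finset.univ.filter (fun j : Fin n => a j ≠ 0)).card + coinv n a := by
  classical
  obtain ⟨h01, hrow, hcol⟩ := hx
  -- injectivity of a on nonzero values
  have ainj : ∀ j j' : Fin n, a j ≠ 0 → a j = a j' → j = j' := by
    intro j j' hj h
    have hlt : a j - 1 < n :=
      lt_of_lt_of_le (Nat.sub_lt (Nat.pos_of_ne_zero hj) one_pos) (hbd j)
    have h1 : a j = (⟨a j - 1, hlt⟩ : Fin n).val + 1 :=
      (Nat.succ_pred_eq_of_pos (Nat.pos_of_ne_zero hj)).symm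
    exact hrow ⟨a j - 1, hlt⟩ j j' ((hcode j _).2 h1) ((hcode j' _).2 (by rw [← h]; exact h1))
  set Q : Fin n → Fin n → Prop :=
    fun i j => i.val + 1 ≤ a j ∧ ∃ j' : Fin n, a j' = i.val + 1 ∧ j' ≤ j with hQdef
  have hsub : (upperT F n).map (LinearMap.mulRight F x) ⊓
      (upperT F n).map (LinearMap.mulLeft F x) = coordSub F Q := by
    apply le_antisymm
    · rintro m hm
      obtain ⟨⟨t, ht, htm⟩, ⟨s, hs, hsm⟩⟩ := hm
      simp only [LinearMap.mulRight_apply] at htm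
      simp only [LinearMap.mulLeft_apply] at hsm
      intro i j hQij
      by_cases h1 : i.val + 1 ≤ a j
      · -- second conjunct fails; use m = x * s
        have h2 : ¬ ∃ j' : Fin n, a j' = i.val + 1 ∧ j' ≤ j := fun h => hQij ⟨h1, h⟩
        rw [← hsm, Matrix.mul_apply]
        apply Finset.sum_eq_zero
        intro k _
        by_cases hk : x i k = 0
        · simp [hk]
        · have hak : a k = i.val + 1 := (hcode k i).1 hk
          have : ¬ k ≤ j := fun hle => h2 ⟨k, hak, hle⟩
          rw [hs k j (lt_of_not_ge this)]
          simp
      · -- first conjunct fails; use m = t * x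
        rw [← htm, Matrix.mul_apply]
        apply Finset.sum_eq_zero
        intro k _
        by_cases hk : x k j = 0
        · simp [hk]
        · have hak : a j = k.val + 1 := (hcode j k).1 hk
          have : k < i := by
            have : k.val + 1 ≤ i.val := by omega
            exact Fin.lt_def.2 (by omega)
          rw [ht i k this]
          simp
    · intro m hm
      have hmQ : ∀ i j, ¬ Q i j → m i j = 0 := hm
      refine ⟨⟨?_, ?_, ?_⟩, ⟨?_, ?_, ?_⟩⟩
      -- t such that t * x = m
      · exact fun i k => if h : ∃ j : Fin n, a j = k.val + 1 then m i h.choose else 0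
      · -- upper triangular
        intro i k hki
        by_cases h : ∃ j : Fin n, a j = k.val + 1
        · simp only [dif_pos h]
          apply hmQ
          rintro ⟨hc1, -⟩
          rw [h.choose_spec] at hc1
          have hki' : k.val < i.val := hki
          omega
        · simp [dif_neg h]
      · -- t * x = m
        show _ * x = _
        ext i j
        erw [Matrix.mul_apply]
        by_cases hj : a j = 0
        · have : ∀ k : Fin n, x k j = 0 := by
            intro k
            by_contra hk
            have := (hcode j k).1 hk
            omega
          rw [Finset.sum_eq_zero (fun k _ => by rw [this k]; simp)]
          symm
          apply hmQ
          rintro ⟨hc1, -⟩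
          omega
        · have hlt : a j - 1 < n :=
            lt_of_lt_of_le (Nat.sub_lt (Nat.pos_of_ne_zero hj) one_pos) (hbd j)
          set k₀ : Fin n := ⟨a j - 1, hlt⟩ with hk₀def
          have hk₀ : a j = k₀.val + 1 := (Nat.succ_pred_eq_of_pos (Nat.pos_of_ne_zero hj)).symm
          have hne : x k₀ j ≠ 0 := (hcode j k₀).2 hk₀
          have hx1 : x k₀ j = 1 := by
            rcases h01 k₀ j with h0 | h1
            · exact absurd h0 hne
            · exact h1
          rw [Finset.sum_eq_single k₀]
          · rw [hx1, mul_one]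
            have hex : ∃ j' : Fin n, a j' = k₀.val + 1 := ⟨j, hk₀⟩
            simp only [dif_pos hex]
            congr 1
            have hcs : a hex.choose = a j - 1 + 1 := hex.choose_spec
            exact ainj hex.choose j (by omega) (by omega)
          · intro k _ hkne
            have : x k j = 0 := by
              by_contra hk
              have := (hcode j k).1 hk
              exact hkne (Fin.ext (by omega))
            rw [this, mul_zero]
          · intro h; exact absurd (Finset.mem_univ k₀) h
      -- s such that x * s = m
      · exact fun k j => if h : 0 < a k then
          m ⟨a k - 1, lt_of_lt_of_le (Nat.sub_lt h one_pos) (hbd k)⟩ j else 0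
      · -- upper triangular
        intro k j hjk
        by_cases h : 0 < a k
        · simp only [dif_pos h]
          apply hmQ
          rintro ⟨-, j', hj'1, hj'2⟩
          have hj'1' : a j' = a k - 1 + 1 := hj'1
          have hj'k : j' = k := ainj j' k (by omega) (by omega)
          exact absurd (hj'k ▸ hj'2) (not_le.2 hjk)
        · simp [dif_neg h]
      · -- x * s = m
        show x * _ = _
        ext i j
        erw [Matrix.mul_apply]
        by_cases hex : ∃ k : Fin n, a k = i.val + 1
        · obtain ⟨k₀, hk₀⟩ := hex
          have hne : x i k₀ ≠ 0 := (hcode k₀ i).2 hk₀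
          have hx1 : x i k₀ = 1 := by
            rcases h01 i k₀ with h0 | h1
            · exact absurd h0 hne
            · exact h1
          rw [Finset.sum_eq_single k₀]
          · rw [hx1, one_mul]
            have hpos : 0 < a k₀ := by omega
            simp only [dif_pos hpos]
            congr 1
            apply Fin.ext
            show a k₀ - 1 = i.val
            omega
          · intro k _ hkne
            have : x i k = 0 := by
              by_contra hk
              have hak := (hcode k i).1 hk
              exact hkne (ainj k k₀ (by omega) (by omega))
            rw [this, zero_mul]
          · intro h; exact absurd (Finset.mem_univ k₀) h
        · rw [Finset.sum_eq_zero]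
          · symm
            apply hmQ
            rintro ⟨-, j', hj'1, -⟩
            exact hex ⟨j', hj'1⟩
          · intro k _
            have : x i k = 0 := by
              by_contra hk
              exact hex ⟨k, (hcode k i).1 hk⟩
            rw [this, zero_mul]
  rw [hsub, finrank_coord]
  -- Counting
  set B : Finset (Fin n × Fin n) :=
    Finset.univ.filter (fun p : Fin n × Fin n => p.1 ≤ p.2 ∧ 0 < a p.1 ∧ a p.1 ≤ a p.2) with hBdef
  have step1 : (Finset.univ.filter (fun p : Fin n × Fin n => Q p.1 p.2)).card = B.card := by
    symm
    apply Finset.card_bij (fun p hp =>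
      (⟨a p.1 - 1, lt_of_lt_of_le (Nat.sub_lt (by
        simp only [hBdef, Finset.mem_filter] at hp; omega) one_pos) (hbd p.1)⟩, p.2))
    · intro p hp
      simp only [hBdef, Finset.mem_filter, Finset.mem_univ, true_and] at hp ⊢
      obtain ⟨h1, h2, h3⟩ := hp
      refine ⟨show a p.1 - 1 + 1 ≤ a p.2 by omega, p.1,
        show a p.1 = a p.1 - 1 + 1 by omega, h1⟩
    · intro p hp q hq heq
      simp only [hBdef, Finset.mem_filter, Finset.mem_univ, true_and] at hp hq
      simp only [Prod.mk.injEq, Fin.mk.injEq] at heq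
      obtain ⟨he1, he2⟩ := heq
      have : a p.1 = a q.1 := by omega
      exact Prod.ext (ainj p.1 q.1 (by omega) this) he2
    · intro p hp
      simp only [Finset.mem_filter, Finset.mem_univ, true_and] at hp
      obtain ⟨h1, j', hj'1, hj'2⟩ := hp
      refine ⟨(j', p.2), ?_, ?_⟩
      · simp only [hBdef, Finset.mem_filter, Finset.mem_univ, true_and]
        exact ⟨hj'2, by omega, by omega⟩
      · apply Prod.ext
        · apply Fin.ext
          show a j' - 1 = p.1.val
          omega
        · rfl
  rw [step1]
  have step2 : (B.filter (fun p => p.1 = p.2)).card =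
      (Finset.univ.filter (fun j : Fin n => a j ≠ 0)).card := by
    apply Finset.card_bij (fun p _ => p.1)
    · intro p hp
      simp only [hBdef, Finset.mem_filter, Finset.mem_univ, true_and] at hp ⊢
      obtain ⟨⟨-, h2, -⟩, -⟩ := hp
      omega
    · intro p hp q hq heq
      simp only [hBdef, Finset.mem_filter, Finset.mem_univ, true_and] at hp hq
      exact Prod.ext heq (by rw [← hp.2, ← hq.2, heq])
    · intro j hj
      simp only [Finset.mem_filter, Finset.mem_univ, true_and] at hj
      exact ⟨(j, j), by simp [hBdef]; omega, rfl⟩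
  have step3 : (B.filter (fun p => ¬ p.1 = p.2)).card = coinv n a := by
    unfold coinv
    apply Finset.card_bij (fun p _ => p)
    · intro p hp
      simp only [hBdef, Finset.mem_filter, Finset.mem_univ, true_and] at hp ⊢
      obtain ⟨⟨h1, h2, h3⟩, h4⟩ := hp
      refine ⟨lt_of_le_of_ne h1 h4, h2, lt_of_le_of_ne h3 ?_⟩
      intro he
      exact h4 (ainj p.1 p.2 (by omega) he)
    · intro p _ q _ h; exact h
    · intro p hp
      simp only [Finset.mem_filter, Finset.mem_univ, true_and] at hp
      refine ⟨p, ?_, rfl⟩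
      simp only [hBdef, Finset.mem_filter, Finset.mem_univ, true_and]
      exact ⟨⟨le_of_lt hp.1, hp.2.1, le_of_lt hp.2.2⟩, ne_of_lt hp.1⟩
  rw [← step2, ← step3]
  exact (Finset.card_filter_add_card_filter_not
    (s := B) (p := fun p : Fin n × Fin n => p.1 = p.2)).symm
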